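/- With the notation of the previous item, suppose additionally J(u) = 1 for u ∈ [2δ, D-2δ]. Then ((1/(2π)) ∫_ℝ |t| J_h(t) dt)² ≥ (L/(πβr)) h^{r-2} e^{-2β/h^r} [e^{-4βδ} - e^{-2β(D-2δ)}]² (1 + o(1)) as h → 0⁺. -/

import Mathlib

open MeasureTheory Real Filter

theorem psb_ftc (β r : ℝ) (hβ : 0 < β) (hr0 : 0 < r) {a b : ℝ} (ha : 0 < a) (hab : a ≤ b) :
    ∫ t in Set.Icc a b, t ^ (r - 1) * Real.exp (-2 * β * t ^ r) =
      (Real.exp (-2 * β * a ^ r) - Real.exp (-2 * β * b ^ r)) / (2 * β * r) := by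
  have hcont : ContinuousOn (fun t : ℝ => t ^ (r - 1) * Real.exp (-2 * β * t ^ r)) (Set.Icc a b) := by
    apply ContinuousOn.mul
    · exact (continuousOn_id.rpow_const (fun x hx => Or.inl (ne_of_gt (lt_of_lt_of_le ha hx.1))))
    · exact (continuousOn_const.mul
        (continuousOn_id.rpow_const (fun x hx => Or.inl (ne_of_gt (lt_of_lt_of_le ha hx.1))))).rexp
  have key : ∫ t in a..b, t ^ (r - 1) * Real.exp (-2 * β * t ^ r) =
      (-(1 / (2 * β * r)) * Real.exp (-2 * β * b ^ r)) -
        (-(1 / (2 * β * r)) * Real.exp (-2 * β * a ^ r)) := by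
    apply intervalIntegral.integral_eq_sub_of_hasDerivAt
    · intro x hx
      rw [Set.uIcc_of_le hab] at hx
      have hx0 : x ≠ 0 := ne_of_gt (lt_of_lt_of_le ha hx.1)
      have h1 : HasDerivAt (fun t : ℝ => -2 * β * t ^ r) (-2 * β * (r * x ^ (r - 1))) x :=
        (Real.hasDerivAt_rpow_const (Or.inl hx0)).const_mul _
      have h2 := (h1.exp).const_mul (-(1 / (2 * β * r)))
      refine h2.congr_deriv ?_
      have hβr : 2 * β * r ≠ 0 := by positivity
      rw [show -(1 / (2 * β * r)) * (Real.exp (-2 * β * x ^ r) * (-2 * β * (r * x ^ (r - 1)))) =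
        (1 / (2 * β * r) * (2 * β * r)) * (x ^ (r - 1) * Real.exp (-2 * β * x ^ r)) by ring,
        one_div_mul_cancel hβr, one_mul]
    · exact (hcont.mono (by rw [Set.uIcc_of_le hab])).intervalIntegrable
  rw [MeasureTheory.integral_Icc_eq_integral_Ioc, ← intervalIntegral.integral_of_le hab, key]
  ring

theorem psb_sandwich (β r : ℝ) (hβ : 0 < β) (hr0 : 0 < r) (hr2 : r ≤ 2) {a b : ℝ}
    (ha : 0 < a) (hab : a ≤ b) :
    a ^ (2 - r) * ((Real.exp (-2 * β * a ^ r) - Real.exp (-2 * β * b ^ r)) / (2 * β * r)) ≤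
      ∫ t in Set.Icc a b, t * Real.exp (-2 * β * t ^ r) ∧
    ∫ t in Set.Icc a b, t * Real.exp (-2 * β * t ^ r) ≤
      b ^ (2 - r) * ((Real.exp (-2 * β * a ^ r) - Real.exp (-2 * β * b ^ r)) / (2 * β * r)) := by
  have hmeas : MeasurableSet (Set.Icc a b) := measurableSet_Icc
  have hcont1 : ContinuousOn (fun t : ℝ => t ^ (r - 1) * Real.exp (-2 * β * t ^ r)) (Set.Icc a b) := by
    apply ContinuousOn.mul
    · exact (continuousOn_id.rpow_const (fun x hx => Or.inl (ne_of_gt (lt_of_lt_of_le ha hx.1))))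
    · exact (continuousOn_const.mul
        (continuousOn_id.rpow_const (fun x hx => Or.inl (ne_of_gt (lt_of_lt_of_le ha hx.1))))).rexp
  have hcont2 : ContinuousOn (fun t : ℝ => t * Real.exp (-2 * β * t ^ r)) (Set.Icc a b) := by
    apply ContinuousOn.mul continuousOn_id
    exact (continuousOn_const.mul
        (continuousOn_id.rpow_const (fun x hx => Or.inl (ne_of_gt (lt_of_lt_of_le ha hx.1))))).rexp
  have hint1 : IntegrableOn (fun t : ℝ => t ^ (r - 1) * Real.exp (-2 * β * t ^ r)) (Set.Icc a b) :=
    hcont1.integrableOn_compact isCompact_Icc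
  have hint2 : IntegrableOn (fun t : ℝ => t * Real.exp (-2 * β * t ^ r)) (Set.Icc a b) :=
    hcont2.integrableOn_compact isCompact_Icc
  have key : ∀ t ∈ Set.Icc a b,
      a ^ (2 - r) * (t ^ (r - 1) * Real.exp (-2 * β * t ^ r)) ≤
        t * Real.exp (-2 * β * t ^ r) ∧
      t * Real.exp (-2 * β * t ^ r) ≤
        b ^ (2 - r) * (t ^ (r - 1) * Real.exp (-2 * β * t ^ r)) := by
    intro t ht
    have ht0 : 0 < t := lt_of_lt_of_le ha ht.1
    have hpow : t ^ (2 - r) * t ^ (r - 1) = t := by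
      rw [← Real.rpow_add ht0]; norm_num
    have hr1 : (0:ℝ) < t ^ (r - 1) := Real.rpow_pos_of_pos ht0 _
    constructor
    · have h1 : a ^ (2 - r) ≤ t ^ (2 - r) := Real.rpow_le_rpow ha.le ht.1 (by linarith)
      calc a ^ (2 - r) * (t ^ (r - 1) * Real.exp (-2 * β * t ^ r))
          ≤ t ^ (2 - r) * (t ^ (r - 1) * Real.exp (-2 * β * t ^ r)) := by
            apply mul_le_mul_of_nonneg_right h1; positivity
        _ = t * Real.exp (-2 * β * t ^ r) := by rw [← mul_assoc, hpow]
    · have h1 : t ^ (2 - r) ≤ b ^ (2 - r) := Real.rpow_le_rpow ht0.le ht.2 (by linarith)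
      calc t * Real.exp (-2 * β * t ^ r)
          = t ^ (2 - r) * (t ^ (r - 1) * Real.exp (-2 * β * t ^ r)) := by rw [← mul_assoc, hpow]
        _ ≤ b ^ (2 - r) * (t ^ (r - 1) * Real.exp (-2 * β * t ^ r)) := by
            apply mul_le_mul_of_nonneg_right h1; positivity
  constructor
  · calc a ^ (2 - r) * ((Real.exp (-2 * β * a ^ r) - Real.exp (-2 * β * b ^ r)) / (2 * β * r))
        = ∫ t in Set.Icc a b, a ^ (2 - r) * (t ^ (r - 1) * Real.exp (-2 * β * t ^ r)) := by
          rw [MeasureTheory.integral_const_mul, psb_ftc β r hβ hr0 ha hab]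
      _ ≤ ∫ t in Set.Icc a b, t * Real.exp (-2 * β * t ^ r) :=
          MeasureTheory.setIntegral_mono_on (hint1.const_mul _) hint2 hmeas (fun t ht => (key t ht).1)
  · calc ∫ t in Set.Icc a b, t * Real.exp (-2 * β * t ^ r)
        ≤ ∫ t in Set.Icc a b, b ^ (2 - r) * (t ^ (r - 1) * Real.exp (-2 * β * t ^ r)) :=
          MeasureTheory.setIntegral_mono_on hint2 (hint1.const_mul _) hmeas (fun t ht => (key t ht).2)
      _ = b ^ (2 - r) * ((Real.exp (-2 * β * a ^ r) - Real.exp (-2 * β * b ^ r)) / (2 * β * r)) := by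
          rw [MeasureTheory.integral_const_mul, psb_ftc β r hβ hr0 ha hab]

theorem psb_neg (φ : ℝ → ℝ) (hφ : ∀ t, φ (-t) = φ t) {a b : ℝ} (hab : a ≤ b) :
    ∫ t in Set.Icc (-b) (-a), φ t = ∫ t in Set.Icc a b, φ t := by
  rw [MeasureTheory.integral_Icc_eq_integral_Ioc, MeasureTheory.integral_Icc_eq_integral_Ioc,
    ← intervalIntegral.integral_of_le (by linarith : -b ≤ -a),
    ← intervalIntegral.integral_of_le hab, ← intervalIntegral.integral_comp_neg]
  simp only [hφ]

theorem psb_union (φ : ℝ → ℝ) {a b : ℝ} (ha : 0 < a) (hab : a ≤ b)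
    (h1 : IntegrableOn φ (Set.Icc (-b) (-a))) (h2 : IntegrableOn φ (Set.Icc a b)) :
    ∫ t in (Set.Icc (-b) (-a) ∪ Set.Icc a b), φ t =
      (∫ t in Set.Icc (-b) (-a), φ t) + ∫ t in Set.Icc a b, φ t := by
  apply MeasureTheory.setIntegral_union _ measurableSet_Icc h1 h2
  rw [Set.disjoint_left]
  intro x hx hx'
  have := hx.2; have := hx'.1; linarith

set_option maxHeartbeats 1000000 in
theorem psb_perh (β L r δ D : ℝ) (hβ : 0 < β) (hL : 0 < L)
    (hr0 : 0 < r) (hr2 : r ≤ 2) (hδ : 0 < δ) (hD : 4 * δ < D)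
    (J : ℝ → ℝ) (hJmeas : Measurable J) (hJ0 : ∀ u, 0 ≤ J u) (hJ1 : ∀ u, J u ≤ 1)
    (hJsupp : ∀ u, u ∉ Set.Icc δ (D - δ) → J u = 0)
    (hJone : ∀ u, u ∈ Set.Icc (2 * δ) (D - 2 * δ) → J u = 1)
    (Jh : ℝ → ℝ → ℝ)
    (hJh : ∀ h t, Jh h t = 2 * Real.sqrt (Real.pi * β * r * L) * h ^ (1 - r / 2) *
        Real.exp (β / h ^ r) * Real.exp (-2 * β * |t| ^ r) * J (|t| ^ r - 1 / h ^ r))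
    (h : ℝ) (hh : 0 < h) :
    (((L / (Real.pi * β * r)) * h ^ (r - 2) * Real.exp (-2 * β / h ^ r) *
        (Real.exp (-4 * β * δ) - Real.exp (-2 * β * (D - 2 * δ))) ^ 2) ≤
      ((1 / (2 * Real.pi)) * ∫ t : ℝ, |t| * Jh h t) ^ 2 ∧
      0 < (L / (Real.pi * β * r)) * h ^ (r - 2) * Real.exp (-2 * β / h ^ r) *
        (Real.exp (-4 * β * δ) - Real.exp (-2 * β * (D - 2 * δ))) ^ 2) ∧
    (h ^ r * (D - δ) ≤ 1 →
      ((1 / (2 * Real.pi)) * ∫ t : ℝ, |t| * Jh h t) ^ 2 ≤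
        (((2:ℝ) ^ (r⁻¹ * (2 - r))) ^ 2 * Real.exp (-4 * β * δ) /
            (Real.exp (-4 * β * δ) - Real.exp (-2 * β * (D - 2 * δ))) ^ 2) *
          ((L / (Real.pi * β * r)) * h ^ (r - 2) * Real.exp (-2 * β / h ^ r) *
            (Real.exp (-4 * β * δ) - Real.exp (-2 * β * (D - 2 * δ))) ^ 2)) := by
  have hπ : (0:ℝ) < Real.pi := Real.pi_pos
  have hr0' : r ≠ 0 := ne_of_gt hr0
  have hhr : 0 < h ^ r := Real.rpow_pos_of_pos hh r
  have hδD : 2 * δ ≤ D - 2 * δ := by linarith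
  -- the E quantity
  set E : ℝ := Real.exp (-4 * β * δ) - Real.exp (-2 * β * (D - 2 * δ)) with hEdef
  have hE : 0 < E := by
    have : Real.exp (-2 * β * (D - 2 * δ)) < Real.exp (-4 * β * δ) :=
      Real.exp_lt_exp.mpr (by
        have hprod : (0:ℝ) < β * (D - 4 * δ) := mul_pos hβ (by linarith)
        nlinarith [hprod])
    simpa [hEdef] using sub_pos.mpr this
  -- rpow helper
  have hrpowr : ∀ x : ℝ, 0 < x → (x ^ r⁻¹) ^ r = x := fun x hx => by
    rw [← Real.rpow_mul hx.le, inv_mul_cancel₀ hr0', Real.rpow_one]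
  -- endpoints
  set a : ℝ := (1 / h ^ r + 2 * δ) ^ r⁻¹ with hadef
  set b : ℝ := (1 / h ^ r + (D - 2 * δ)) ^ r⁻¹ with hbdef
  set a2 : ℝ := (1 / h ^ r + δ) ^ r⁻¹ with ha2def
  set b2 : ℝ := (1 / h ^ r + (D - δ)) ^ r⁻¹ with hb2def
  have hch : (0:ℝ) < 1 / h ^ r := by positivity
  have ha : 0 < a := Real.rpow_pos_of_pos (by linarith) _
  have hb : 0 < b := Real.rpow_pos_of_pos (by linarith) _
  have ha2 : 0 < a2 := Real.rpow_pos_of_pos (by linarith) _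
  have hb2 : 0 < b2 := Real.rpow_pos_of_pos (by linarith) _
  have har : a ^ r = 1 / h ^ r + 2 * δ := hrpowr _ (by linarith)
  have hbr : b ^ r = 1 / h ^ r + (D - 2 * δ) := hrpowr _ (by linarith)
  have ha2r : a2 ^ r = 1 / h ^ r + δ := hrpowr _ (by linarith)
  have hb2r : b2 ^ r = 1 / h ^ r + (D - δ) := hrpowr _ (by linarith)
  have hab : a ≤ b := Real.rpow_le_rpow (by linarith) (by linarith) (by positivity)
  have ha2b2 : a2 ≤ b2 := Real.rpow_le_rpow (by linarith) (by linarith) (by positivity)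
  -- 1/h ≤ a and h^(r-2) ≤ a^(2-r)
  have hinvh : ((h ^ r)⁻¹ : ℝ) ^ r⁻¹ = h⁻¹ := by
    rw [← Real.inv_rpow hh.le, ← Real.rpow_mul (by positivity), mul_inv_cancel₀ hr0',
      Real.rpow_one]
  have h1a : h⁻¹ ≤ a := by
    rw [← hinvh]
    exact Real.rpow_le_rpow (by positivity) (by rw [one_div]; linarith) (by positivity)
  have hq : h ^ (r - 2) ≤ a ^ (2 - r) := by
    have h1 : (h⁻¹ : ℝ) ^ (2 - r) ≤ a ^ (2 - r) :=
      Real.rpow_le_rpow (by positivity) h1a (by linarith)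
    have h2 : (h⁻¹ : ℝ) ^ (2 - r) = h ^ (r - 2) := by
      rw [← Real.rpow_neg_one h, ← Real.rpow_mul hh.le]
      congr 1; ring
    linarith
  -- constants and functions
  set Cst : ℝ := 2 * Real.sqrt (Real.pi * β * r * L) * h ^ (1 - r / 2) *
      Real.exp (β / h ^ r) with hCdef
  have hC0 : 0 ≤ Cst := by
    rw [hCdef]; positivity
  set f : ℝ → ℝ := fun t => |t| * Jh h t with hfdef
  set φ : ℝ → ℝ := fun t => Cst * (|t| * Real.exp (-2 * β * |t| ^ r)) with hφdef
  have habs_rpow : Continuous (fun t : ℝ => |t| ^ r) :=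
    continuous_abs.rpow_const (fun x => Or.inr hr0.le)
  have hφcont : Continuous φ := by
    rw [hφdef]
    exact continuous_const.mul (continuous_abs.mul
      ((continuous_const.mul habs_rpow).rexp))
  have hφeven : ∀ t, φ (-t) = φ t := by intro t; simp [hφdef, abs_neg]
  have hf0 : ∀ t, 0 ≤ f t := by
    intro t
    rw [hfdef]
    simp only [hJh]
    exact mul_nonneg (abs_nonneg t) (mul_nonneg (by positivity) (hJ0 _))
  have hfeven : ∀ t, f (-t) = f t := by intro t; simp [hfdef, hJh, abs_neg]
  have hfmeas : Measurable f := by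
    have : f = fun t => |t| * (Cst * Real.exp (-2 * β * |t| ^ r) * J (|t| ^ r - 1 / h ^ r)) := by
      funext t; rw [hfdef]; simp only [hJh, hCdef]
    rw [this]
    exact measurable_abs.mul ((measurable_const.mul
      ((continuous_const.mul habs_rpow).rexp.measurable)).mul
      (hJmeas.comp (habs_rpow.measurable.sub measurable_const)))
  -- pointwise bound by the indicator function
  set S2 : Set ℝ := Set.Icc (-b2) (-a2) ∪ Set.Icc a2 b2 with hS2def
  have hS2meas : MeasurableSet S2 := measurableSet_Icc.union measurableSet_Icc
  have hφ0 : ∀ t, 0 ≤ φ t := by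
    intro t; rw [hφdef]
    exact mul_nonneg hC0 (by positivity)
  have hfleφ : ∀ t, f t ≤ Set.indicator S2 φ t := by
    intro t
    by_cases hmem : a2 ≤ |t| ∧ |t| ≤ b2
    · have htS : t ∈ S2 := by
        rcases le_or_gt 0 t with h0 | h0
        · right
          rw [abs_of_nonneg h0] at hmem
          exact ⟨hmem.1, hmem.2⟩
        · left
          rw [abs_of_neg h0] at hmem
          exact ⟨by linarith [hmem.2], by linarith [hmem.1]⟩
      rw [Set.indicator_of_mem htS, hfdef, hφdef]
      simp only [hJh]
      calc |t| * (2 * Real.sqrt (Real.pi * β * r * L) * h ^ (1 - r / 2) *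
              Real.exp (β / h ^ r) * Real.exp (-2 * β * |t| ^ r) * J (|t| ^ r - 1 / h ^ r))
          ≤ |t| * (2 * Real.sqrt (Real.pi * β * r * L) * h ^ (1 - r / 2) *
              Real.exp (β / h ^ r) * Real.exp (-2 * β * |t| ^ r) * 1) := by
            apply mul_le_mul_of_nonneg_left _ (abs_nonneg t)
            exact mul_le_mul_of_nonneg_left (hJ1 _) (by positivity)
        _ = Cst * (|t| * Real.exp (-2 * β * |t| ^ r)) := by rw [hCdef]; ring
    · have hJz : J (|t| ^ r - 1 / h ^ r) = 0 := by
        apply hJsupp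
        intro hu
        rcases not_and_or.mp hmem with hlt | hgt
        · push_neg at hlt
          have : |t| ^ r < a2 ^ r := Real.rpow_lt_rpow (abs_nonneg t) hlt hr0
          rw [ha2r] at this
          have := hu.1
          linarith
        · push_neg at hgt
          have : b2 ^ r < |t| ^ r := Real.rpow_lt_rpow (by positivity) hgt hr0
          rw [hb2r] at this
          have := hu.2
          linarith
      have : f t = 0 := by rw [hfdef]; simp only [hJh, hJz]; ring
      rw [this]
      exact Set.indicator_nonneg (fun s _ => hφ0 s) t
  -- integrability
  have hg_int : Integrable (S2.indicator φ) := by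
    apply (IntegrableOn.integrable_indicator _ hS2meas)
    exact (hφcont.integrableOn_Icc).union (hφcont.integrableOn_Icc)
  have hf_int : Integrable f := by
    apply hg_int.mono' hfmeas.aestronglyMeasurable
    filter_upwards with t
    rw [Real.norm_eq_abs, abs_of_nonneg (hf0 t)]
    exact hfleφ t
  have hI0 : 0 ≤ ∫ t, f t := integral_nonneg hf0
  -- lower bound on the integral
  set Q : ℝ := (Real.exp (-2 * β * (1 / h ^ r + 2 * δ)) -
      Real.exp (-2 * β * (1 / h ^ r + (D - 2 * δ)))) / (2 * β * r) with hQdef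
  have hQ0 : 0 ≤ Q := by
    rw [hQdef]
    apply div_nonneg _ (by positivity)
    have : Real.exp (-2 * β * (1 / h ^ r + (D - 2 * δ))) ≤
        Real.exp (-2 * β * (1 / h ^ r + 2 * δ)) := Real.exp_le_exp.mpr (by
          have hprod : (0:ℝ) < β * (D - 4 * δ) := mul_pos hβ (by linarith)
          nlinarith [hprod])
    linarith
  have hfon : Set.EqOn f (fun t => Cst * (t * Real.exp (-2 * β * t ^ r))) (Set.Icc a b) := by
    intro t ht
    have ht0 : 0 < t := lt_of_lt_of_le ha ht.1
    have habs : |t| = t := abs_of_pos ht0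
    have h1 : a ^ r ≤ t ^ r := Real.rpow_le_rpow ha.le ht.1 hr0.le
    have h2 : t ^ r ≤ b ^ r := Real.rpow_le_rpow ht0.le ht.2 hr0.le
    rw [har] at h1; rw [hbr] at h2
    have hJ1' : J (|t| ^ r - 1 / h ^ r) = 1 := by
      apply hJone
      rw [habs]
      exact ⟨by linarith, by linarith⟩
    rw [habs] at hJ1'
    rw [hfdef]
    simp only [hJh, habs, hJ1', hCdef]
    ring
  have hIab : ∫ t in Set.Icc a b, f t =
      Cst * ∫ t in Set.Icc a b, t * Real.exp (-2 * β * t ^ r) := by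
    rw [MeasureTheory.setIntegral_congr_fun measurableSet_Icc hfon,
      MeasureTheory.integral_const_mul]
  have hIlow : 2 * (Cst * (h ^ (r - 2) * Q)) ≤ ∫ t, f t := by
    have s1 := (psb_sandwich β r hβ hr0 hr2 ha hab).1
    rw [har, hbr] at s1
    have s2 : Cst * (h ^ (r - 2) * Q) ≤ Cst * ∫ t in Set.Icc a b, t * Real.exp (-2 * β * t ^ r) := by
      apply mul_le_mul_of_nonneg_left _ hC0
      calc h ^ (r - 2) * Q ≤ a ^ (2 - r) * Q := mul_le_mul_of_nonneg_right hq hQ0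
        _ ≤ _ := by rw [hQdef]; exact s1
    have s3 : ∫ t in (Set.Icc (-b) (-a) ∪ Set.Icc a b), f t = 2 * ∫ t in Set.Icc a b, f t := by
      rw [psb_union f ha hab hf_int.integrableOn hf_int.integrableOn, psb_neg f hfeven hab]
      ring
    have s4 : ∫ t in (Set.Icc (-b) (-a) ∪ Set.Icc a b), f t ≤ ∫ t, f t :=
      MeasureTheory.setIntegral_le_integral hf_int (ae_of_all _ hf0)
    rw [hIab] at s3
    linarith
  -- upper bound on the integral
  have hφon : Set.EqOn φ (fun t => Cst * (t * Real.exp (-2 * β * t ^ r))) (Set.Icc a2 b2) := by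
    intro t ht
    have ht0 : 0 < t := lt_of_lt_of_le ha2 ht.1
    rw [hφdef]
    simp only [abs_of_pos ht0]
  have hIup : ∫ t, f t ≤
      2 * (Cst * (b2 ^ (2 - r) * (Real.exp (-2 * β * (1 / h ^ r + δ)) / (2 * β * r)))) := by
    have s1 : ∫ t, f t ≤ ∫ t, S2.indicator φ t := integral_mono hf_int hg_int hfleφ
    have s2 : ∫ t, S2.indicator φ t = 2 * ∫ t in Set.Icc a2 b2, φ t := by
      rw [MeasureTheory.integral_indicator hS2meas, hS2def,
        psb_union φ ha2 ha2b2 (hφcont.integrableOn_Icc) (hφcont.integrableOn_Icc),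
        psb_neg φ hφeven ha2b2]
      ring
    have s3 : ∫ t in Set.Icc a2 b2, φ t =
        Cst * ∫ t in Set.Icc a2 b2, t * Real.exp (-2 * β * t ^ r) := by
      rw [MeasureTheory.setIntegral_congr_fun measurableSet_Icc hφon,
        MeasureTheory.integral_const_mul]
    have s4 := (psb_sandwich β r hβ hr0 hr2 ha2 ha2b2).2
    rw [ha2r, hb2r] at s4
    have s5 : Cst * ∫ t in Set.Icc a2 b2, t * Real.exp (-2 * β * t ^ r) ≤
        Cst * (b2 ^ (2 - r) * (Real.exp (-2 * β * (1 / h ^ r + δ)) / (2 * β * r))) := by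
      apply mul_le_mul_of_nonneg_left _ hC0
      calc ∫ t in Set.Icc a2 b2, t * Real.exp (-2 * β * t ^ r)
          ≤ b2 ^ (2 - r) * ((Real.exp (-2 * β * (1 / h ^ r + δ)) -
              Real.exp (-2 * β * (1 / h ^ r + (D - δ)))) / (2 * β * r)) := s4
        _ ≤ b2 ^ (2 - r) * (Real.exp (-2 * β * (1 / h ^ r + δ)) / (2 * β * r)) := by
            apply mul_le_mul_of_nonneg_left _ (by positivity)
            have := (Real.exp_pos (-2 * β * (1 / h ^ r + (D - δ)))).le
            gcongr
            linarith
    rw [s3] at s2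
    linarith
  -- shared exp/rpow identities
  have hsq : Real.sqrt (Real.pi * β * r * L) * Real.sqrt (Real.pi * β * r * L) =
      Real.pi * β * r * L := Real.mul_self_sqrt (by positivity)
  have hQE : Q = Real.exp (-2 * β * (1 / h ^ r)) * E / (2 * β * r) := by
    rw [hQdef, hEdef, show -2 * β * (1 / h ^ r + 2 * δ) = -2 * β * (1 / h ^ r) + -4 * β * δ by
      ring, show -2 * β * (1 / h ^ r + (D - 2 * δ)) =
        -2 * β * (1 / h ^ r) + -2 * β * (D - 2 * δ) by ring, Real.exp_add, Real.exp_add]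
    ring
  have e1 : Real.exp (β / h ^ r) * Real.exp (β / h ^ r) *
      (Real.exp (-2 * β * (1 / h ^ r)) * Real.exp (-2 * β * (1 / h ^ r))) =
      Real.exp (-2 * β / h ^ r) := by
    rw [← Real.exp_add, ← Real.exp_add, ← Real.exp_add]
    congr 1
    field_simp
    ring
  have e2 : h ^ (1 - r / 2) * h ^ (1 - r / 2) * (h ^ (r - 2) * h ^ (r - 2)) = h ^ (r - 2) := by
    rw [← Real.rpow_add hh, ← Real.rpow_add hh, ← Real.rpow_add hh]
    congr 1; ring
  constructor
  · constructor
    · -- lower bound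
      have hBlo0 : 0 ≤ (1 / (2 * Real.pi)) * (2 * (Cst * (h ^ (r - 2) * Q))) := by
        have := Real.rpow_pos_of_pos hh (r - 2)
        positivity
      have hBloLHS : (1 / (2 * Real.pi)) * (2 * (Cst * (h ^ (r - 2) * Q))) ≤
          (1 / (2 * Real.pi)) * ∫ t, f t := mul_le_mul_of_nonneg_left hIlow (by positivity)
      have hTeq : (L / (Real.pi * β * r)) * h ^ (r - 2) * Real.exp (-2 * β / h ^ r) * E ^ 2 =
          ((1 / (2 * Real.pi)) * (2 * (Cst * (h ^ (r - 2) * Q)))) ^ 2 := by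
        have expand : ((1 / (2 * Real.pi)) * (2 * (Cst * (h ^ (r - 2) * Q)))) ^ 2 =
            (Real.sqrt (Real.pi * β * r * L) * Real.sqrt (Real.pi * β * r * L)) *
              (h ^ (1 - r / 2) * h ^ (1 - r / 2) * (h ^ (r - 2) * h ^ (r - 2))) *
              (Real.exp (β / h ^ r) * Real.exp (β / h ^ r) *
                (Real.exp (-2 * β * (1 / h ^ r)) * Real.exp (-2 * β * (1 / h ^ r)))) * E ^ 2 /
              (Real.pi * β * r) ^ 2 := by
          rw [hQE, hCdef]; ring
        rw [expand, hsq, e1, e2]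
        field_simp
      calc (L / (Real.pi * β * r)) * h ^ (r - 2) * Real.exp (-2 * β / h ^ r) * E ^ 2
          = ((1 / (2 * Real.pi)) * (2 * (Cst * (h ^ (r - 2) * Q)))) ^ 2 := hTeq
        _ ≤ ((1 / (2 * Real.pi)) * ∫ t, f t) ^ 2 := pow_le_pow_left₀ hBlo0 hBloLHS 2
    · -- positivity of the denominator
      have h1 : 0 < h ^ (r - 2) := Real.rpow_pos_of_pos hh _
      have h2 : (0:ℝ) < L / (Real.pi * β * r) := by positivity
      exact mul_pos (mul_pos (mul_pos h2 h1) (Real.exp_pos _)) (pow_pos hE 2)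
  · -- upper bound
    intro hsmall
    have hhrr : (h ^ r) ^ r⁻¹ = h := by
      rw [← Real.rpow_mul hh.le, mul_inv_cancel₀ hr0', Real.rpow_one]
    have hb2' : h * b2 ≤ (2:ℝ) ^ r⁻¹ := by
      have e4 : h * b2 = (h ^ r * (1 / h ^ r + (D - δ))) ^ r⁻¹ := by
        rw [Real.mul_rpow hhr.le (by linarith : (0:ℝ) ≤ 1 / h ^ r + (D - δ)), hhrr, ← hb2def]
      have e5 : h ^ r * (1 / h ^ r + (D - δ)) = 1 + h ^ r * (D - δ) := by
        field_simp
      rw [e4, e5]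
      exact Real.rpow_le_rpow
        (by
          have hprod : (0:ℝ) < h ^ r * (D - δ) := mul_pos hhr (by linarith)
          linarith)
        (by linarith) (by positivity)
    have hw : h ^ (2 - r) * b2 ^ (2 - r) ≤ (2:ℝ) ^ (r⁻¹ * (2 - r)) := by
      rw [← Real.mul_rpow hh.le hb2.le]
      calc (h * b2) ^ (2 - r) ≤ ((2:ℝ) ^ r⁻¹) ^ (2 - r) :=
            Real.rpow_le_rpow (by positivity) hb2' (by linarith)
        _ = (2:ℝ) ^ (r⁻¹ * (2 - r)) := by
            rw [← Real.rpow_mul (by norm_num : (0:ℝ) ≤ 2)]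
    have hw2 : (h ^ (2 - r) * b2 ^ (2 - r)) ^ 2 ≤ ((2:ℝ) ^ (r⁻¹ * (2 - r))) ^ 2 := by
      apply pow_le_pow_left₀ _ hw 2
      have := Real.rpow_pos_of_pos hh (2 - r)
      have := Real.rpow_pos_of_pos hb2 (2 - r)
      positivity
    have hLHS0 : 0 ≤ (1 / (2 * Real.pi)) * ∫ t, f t := mul_nonneg (by positivity) hI0
    have hLHSle : (1 / (2 * Real.pi)) * ∫ t, f t ≤ (1 / (2 * Real.pi)) *
        (2 * (Cst * (b2 ^ (2 - r) * (Real.exp (-2 * β * (1 / h ^ r + δ)) / (2 * β * r))))) :=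
      mul_le_mul_of_nonneg_left hIup (by positivity)
    have e6 : Real.exp (β / h ^ r) * Real.exp (β / h ^ r) *
        (Real.exp (-2 * β * (1 / h ^ r + δ)) * Real.exp (-2 * β * (1 / h ^ r + δ))) =
        Real.exp (-2 * β / h ^ r) * Real.exp (-4 * β * δ) := by
      rw [← Real.exp_add, ← Real.exp_add, ← Real.exp_add, ← Real.exp_add]
      congr 1
      field_simp
      ring
    have e7 : h ^ (1 - r / 2) * h ^ (1 - r / 2) = h ^ (2 - r) := by
      rw [← Real.rpow_add hh]; congr 1; ring
    have e8 : h ^ (2 - r) * (b2 ^ (2 - r) * b2 ^ (2 - r)) =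
        (h ^ (2 - r) * b2 ^ (2 - r)) ^ 2 * h ^ (r - 2) := by
      have e9 : h ^ (2 - r) * (h ^ (2 - r) * h ^ (r - 2)) = h ^ (2 - r) := by
        rw [← Real.rpow_add hh, ← Real.rpow_add hh]; congr 1; ring
      calc h ^ (2 - r) * (b2 ^ (2 - r) * b2 ^ (2 - r))
          = (h ^ (2 - r) * (h ^ (2 - r) * h ^ (r - 2))) * (b2 ^ (2 - r) * b2 ^ (2 - r)) := by
            rw [e9]
        _ = (h ^ (2 - r) * b2 ^ (2 - r)) ^ 2 * h ^ (r - 2) := by ring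
    have hBup2 : ((1 / (2 * Real.pi)) *
        (2 * (Cst * (b2 ^ (2 - r) * (Real.exp (-2 * β * (1 / h ^ r + δ)) / (2 * β * r)))))) ^ 2 ≤
        ((2:ℝ) ^ (r⁻¹ * (2 - r))) ^ 2 * Real.exp (-4 * β * δ) / E ^ 2 *
          ((L / (Real.pi * β * r)) * h ^ (r - 2) * Real.exp (-2 * β / h ^ r) * E ^ 2) := by
      have expandU : ((1 / (2 * Real.pi)) *
          (2 * (Cst * (b2 ^ (2 - r) * (Real.exp (-2 * β * (1 / h ^ r + δ)) / (2 * β * r)))))) ^ 2 =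
          (Real.sqrt (Real.pi * β * r * L) * Real.sqrt (Real.pi * β * r * L)) *
            (h ^ (1 - r / 2) * h ^ (1 - r / 2) * (b2 ^ (2 - r) * b2 ^ (2 - r))) *
            (Real.exp (β / h ^ r) * Real.exp (β / h ^ r) *
              (Real.exp (-2 * β * (1 / h ^ r + δ)) * Real.exp (-2 * β * (1 / h ^ r + δ)))) /
            (Real.pi * β * r) ^ 2 := by
        rw [hCdef]; ring
      rw [expandU, hsq, mul_assoc (h ^ (1 - r / 2)), ← mul_assoc (h ^ (1 - r / 2)), e7, e8, e6]
      calc Real.pi * β * r * L * ((h ^ (2 - r) * b2 ^ (2 - r)) ^ 2 * h ^ (r - 2)) *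
            (Real.exp (-2 * β / h ^ r) * Real.exp (-4 * β * δ)) / (Real.pi * β * r) ^ 2
          = (h ^ (2 - r) * b2 ^ (2 - r)) ^ 2 * (Real.pi * β * r * L * h ^ (r - 2) *
              (Real.exp (-2 * β / h ^ r) * Real.exp (-4 * β * δ)) / (Real.pi * β * r) ^ 2) := by
            ring
        _ ≤ ((2:ℝ) ^ (r⁻¹ * (2 - r))) ^ 2 * (Real.pi * β * r * L * h ^ (r - 2) *
              (Real.exp (-2 * β / h ^ r) * Real.exp (-4 * β * δ)) / (Real.pi * β * r) ^ 2) := by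
            apply mul_le_mul_of_nonneg_right hw2
            have := Real.rpow_pos_of_pos hh (r - 2)
            positivity
        _ = ((2:ℝ) ^ (r⁻¹ * (2 - r))) ^ 2 * Real.exp (-4 * β * δ) / E ^ 2 *
              ((L / (Real.pi * β * r)) * h ^ (r - 2) * Real.exp (-2 * β / h ^ r) * E ^ 2) := by
            field_simp
    calc ((1 / (2 * Real.pi)) * ∫ t, f t) ^ 2
        ≤ ((1 / (2 * Real.pi)) *
          (2 * (Cst * (b2 ^ (2 - r) * (Real.exp (-2 * β * (1 / h ^ r + δ)) / (2 * β * r)))))) ^ 2 :=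
          pow_le_pow_left₀ hLHS0 hLHSle 2
      _ ≤ _ := hBup2

theorem perturbation_separation_lower_bound (β L r δ D : ℝ) (hβ : 0 < β) (hL : 0 < L)
    (hr0 : 0 < r) (hr2 : r ≤ 2) (hδ : 0 < δ) (hD : 4 * δ < D)
    (J : ℝ → ℝ) (hJmeas : Measurable J) (hJ0 : ∀ u, 0 ≤ J u) (hJ1 : ∀ u, J u ≤ 1)
    (hJsupp : ∀ u, u ∉ Set.Icc δ (D - δ) → J u = 0)
    (hJone : ∀ u, u ∈ Set.Icc (2 * δ) (D - 2 * δ) → J u = 1)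
    (Jh : ℝ → ℝ → ℝ)
    (hJh : ∀ h t, Jh h t = 2 * Real.sqrt (Real.pi * β * r * L) * h ^ (1 - r / 2) *
        Real.exp (β / h ^ r) * Real.exp (-2 * β * |t| ^ r) * J (|t| ^ r - 1 / h ^ r)) :
    1 ≤ Filter.liminf
        (fun h : ℝ =>
          ((1 / (2 * Real.pi)) * ∫ t : ℝ, |t| * Jh h t) ^ 2 /
            ((L / (Real.pi * β * r)) * h ^ (r - 2) * Real.exp (-2 * β / h ^ r) *
              (Real.exp (-4 * β * δ) - Real.exp (-2 * β * (D - 2 * δ))) ^ 2))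
        (nhdsWithin 0 (Set.Ioi 0)) := by
  have key := psb_perh β L r δ D hβ hL hr0 hr2 hδ hD J hJmeas hJ0 hJ1 hJsupp hJone Jh hJh
  have hDδ : (0:ℝ) < D - δ := by linarith
  set A : ℝ := ((2:ℝ) ^ (r⁻¹ * (2 - r))) ^ 2 * Real.exp (-4 * β * δ) /
      (Real.exp (-4 * β * δ) - Real.exp (-2 * β * (D - 2 * δ))) ^ 2 with hAdef
  have hev1 : ∀ᶠ h in nhdsWithin (0:ℝ) (Set.Ioi 0), 1 ≤
      ((1 / (2 * Real.pi)) * ∫ t : ℝ, |t| * Jh h t) ^ 2 /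
        ((L / (Real.pi * β * r)) * h ^ (r - 2) * Real.exp (-2 * β / h ^ r) *
          (Real.exp (-4 * β * δ) - Real.exp (-2 * β * (D - 2 * δ))) ^ 2) := by
    filter_upwards [self_mem_nhdsWithin] with h hh
    obtain ⟨⟨hlow, hT⟩, _⟩ := key h hh
    exact (one_le_div hT).mpr hlow
  have hev2 : ∀ᶠ h in nhdsWithin (0:ℝ) (Set.Ioi 0),
      ((1 / (2 * Real.pi)) * ∫ t : ℝ, |t| * Jh h t) ^ 2 /
        ((L / (Real.pi * β * r)) * h ^ (r - 2) * Real.exp (-2 * β / h ^ r) *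
          (Real.exp (-4 * β * δ) - Real.exp (-2 * β * (D - 2 * δ))) ^ 2) ≤ A := by
    have hr0' : r ≠ 0 := ne_of_gt hr0
    set h₀ : ℝ := ((D - δ)⁻¹) ^ r⁻¹ with hh₀def
    have hh₀ : 0 < h₀ := Real.rpow_pos_of_pos (by positivity) _
    have hlt : ∀ᶠ h in nhdsWithin (0:ℝ) (Set.Ioi 0), h < h₀ :=
      (eventually_lt_nhds hh₀).filter_mono nhdsWithin_le_nhds
    filter_upwards [self_mem_nhdsWithin, hlt] with h hh hhlt
    obtain ⟨⟨_, hT⟩, hup⟩ := key h hh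
    have hsmall : h ^ r * (D - δ) ≤ 1 := by
      have h1 : h ^ r ≤ h₀ ^ r := Real.rpow_le_rpow (le_of_lt hh) hhlt.le hr0.le
      have h2 : h₀ ^ r = (D - δ)⁻¹ := by
        rw [hh₀def, ← Real.rpow_mul (by positivity), inv_mul_cancel₀ hr0', Real.rpow_one]
      rw [h2] at h1
      calc h ^ r * (D - δ) ≤ (D - δ)⁻¹ * (D - δ) :=
            mul_le_mul_of_nonneg_right h1 hDδ.le
        _ = 1 := inv_mul_cancel₀ hDδ.ne'
    rw [div_le_iff₀ hT]
    exact hup hsmall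
  exact le_liminf_of_le (Filter.IsCoboundedUnder.of_frequently_le hev2.frequently) hev1
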